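/- The Teia potential is nonnegative: let (M,d) be a metric space, k ≥ 1, let s_1,…,s_k and a_1,…,a_k be points of M with s_j = a_j for every j ≠ 1, and let E_1,…,E_k ∈ ℝ. Then Φ(s,a,E) ≥ 0. -/
import Mathlib


/-- The isolation index `α(p; q, r) = (d(p,q) + d(p,r) − d(q,r)) / 2`. -/
noncomputable def alpha {M : Type*} [MetricSpace M] (p q r : M) : ℝ :=
  (dist p q + dist p r - dist q r) / 2

/-- The Teia potential `Φ(s, a, E)`:
`Σ_{i<j} d(s_i,s_j) + k·Σ_i d(s_i,a_i) + 2·Σ_i (e_max − E_i)`,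
where `ε^i = Σ_j α(s_j; a_j, s_i)`, `e_i = E_i − ε^i`, and
`e_max = max_i e_i`. -/
noncomputable def teiaPhi {M : Type*} [MetricSpace M] {k : ℕ}
    (s a : Fin k → M) (E : Fin k → ℝ) : ℝ :=
  (∑ i : Fin k, ∑ j ∈ Finset.Ioi i, dist (s i) (s j))
    + k * ∑ i : Fin k, dist (s i) (a i)
    + 2 * ∑ i : Fin k,
        ((⨆ j : Fin k, (E j - ∑ l : Fin k, alpha (s l) (a l) (s j))) - E i)

/-- The Teia potential is nonnegative whenever at most one server is open,
i.e. `s_j = a_j` for every index other than the first. -/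
theorem teiaPhi_nonneg {M : Type*} [MetricSpace M] {k : ℕ} (hk : 1 ≤ k)
    (s a : Fin k → M) (E : Fin k → ℝ)
    (h : ∀ j : Fin k, j ≠ ⟨0, hk⟩ → s j = a j) :
    0 ≤ teiaPhi s a E := by
  haveI : NeZero k := ⟨by omega⟩
  set z : Fin k := ⟨0, hk⟩ with hz
  have hz0 : z = 0 := by
    apply Fin.ext; simp [hz]
  set ε : Fin k → ℝ := fun i => ∑ l : Fin k, alpha (s l) (a l) (s i) with hε
  have hεi : ∀ i, ε i = alpha (s z) (a z) (s i) := by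
    intro i
    show ∑ l : Fin k, alpha (s l) (a l) (s i) = _
    rw [Finset.sum_eq_single z]
    · intro l _ hl
      rw [h l hl]
      simp [alpha]
    · simp
  have hsup : ∀ i, E i - ε i ≤ ⨆ j, (E j - ε j) := fun i =>
    le_ciSup (f := fun j => E j - ε j) (Set.Finite.bddAbove (Set.finite_range _)) i
  set D : ℝ := dist (s z) (a z) with hD
  have h2ε : ∀ i, 2 * ε i ≤ D + dist (s z) (s i) := by
    intro i
    rw [hεi]
    unfold alpha
    have := dist_nonneg (x := a z) (y := s i)
    rw [hD]
    linarith
  have hDsum : ∑ i : Fin k, dist (s i) (a i) = D := by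
    rw [hD, Finset.sum_eq_single z]
    · intro l _ hl
      rw [h l hl, dist_self]
    · simp
  set S : ℝ := ∑ i : Fin k, dist (s z) (s i) with hS
  have hIoi : Finset.Ioi z = Finset.univ.erase z := by
    ext j
    simp only [Finset.mem_Ioi, Finset.mem_erase, Finset.mem_univ, and_true]
    rw [hz0]
    exact Fin.pos_iff_ne_zero' j
  have hSP : S ≤ ∑ i : Fin k, ∑ j ∈ Finset.Ioi i, dist (s i) (s j) := by
    have h1 : S = ∑ j ∈ Finset.Ioi z, dist (s z) (s j) := by
      rw [hIoi, hS]
      rw [← Finset.sum_erase_add Finset.univ _ (Finset.mem_univ z), dist_self,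
        add_zero]
    rw [h1]
    exact Finset.single_le_sum (f := fun i => ∑ j ∈ Finset.Ioi i, dist (s i) (s j))
      (fun i _ => Finset.sum_nonneg fun j _ => dist_nonneg) (Finset.mem_univ z)
  have hsum2ε : ∑ i : Fin k, 2 * ε i ≤ k * D + S := by
    calc ∑ i : Fin k, 2 * ε i ≤ ∑ i : Fin k, (D + dist (s z) (s i)) :=
          Finset.sum_le_sum fun i _ => h2ε i
      _ = k * D + S := by
          rw [Finset.sum_add_distrib, Finset.sum_const, Finset.card_univ,
            Fintype.card_fin, nsmul_eq_mul, hS]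
  have hlast : -(k * D + S) ≤ 2 * ∑ i : Fin k, ((⨆ j, (E j - ε j)) - E i) := by
    have h1 : ∀ i : Fin k, -ε i ≤ (⨆ j, (E j - ε j)) - E i := by
      intro i
      have := hsup i
      linarith
    have h2 : ∑ i : Fin k, (-ε i) ≤ ∑ i : Fin k, ((⨆ j, (E j - ε j)) - E i) :=
      Finset.sum_le_sum fun i _ => h1 i
    have h3 : ∑ i : Fin k, (-ε i) = -∑ i : Fin k, ε i := by
      rw [Finset.sum_neg_distrib]
    have h4 : ∑ i : Fin k, 2 * ε i = 2 * ∑ i : Fin k, ε i := by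
      rw [Finset.mul_sum]
    nlinarith [hsum2ε]
  unfold teiaPhi
  rw [hDsum]
  have : (2 : ℝ) * ∑ i : Fin k, ((⨆ j : Fin k, (E j - ∑ l : Fin k, alpha (s l) (a l) (s j))) - E i)
      = 2 * ∑ i : Fin k, ((⨆ j, (E j - ε j)) - E i) := by rfl
  rw [this]
  linarith [hlast, hSP]
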